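/- For each μ > 0, the bilinear bracket on the 4-dimensional real vector space with basis r₀, r₁, r₂, A determined by [r₀,r₁] = 0, [r₀,r₂] = r₁, [r₁,r₂] = 2r₁, [r₀,A] = r₂, [r₁,A] = 2r₂, [r₂,A] = −r₀ − (2/μ)r₁ + 2A satisfies the Jacobi identity (hence defines a Lie algebra, the isometry Lie algebra of (G₀, g_{μ,1})), and the matrix of its Killing form B(X,Y) = tr(ad_X ∘ ad_Y) in this basis has eigenvalues −(μ + 4 + √(81μ² + 8μ + 16))/μ, −(μ + 4 − √(81μ² + 8μ + 16))/μ, 0, and 8. -/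

import Mathlib

noncomputable section

open scoped BigOperators
open Polynomial

/-- The underlying space of the 4-dimensional isometry Lie algebra. -/
abbrev V4 : Type := Fin 4 → ℝ

/-- The standard basis `r₀, r₁, r₂, A` of the isometry Lie algebra. -/
def e4 (i : Fin 4) : V4 := Pi.single i 1

/-- The bilinear bracket on `ℝ⁴` (basis `r₀,r₁,r₂,A`) determined by
`[r₀,r₁] = 0`, `[r₀,r₂] = r₁`, `[r₁,r₂] = 2r₁`, `[r₀,A] = r₂`, `[r₁,A] = 2r₂`,
`[r₂,A] = −r₀ − (2/μ) r₁ + 2A`. -/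
def bra4 (μ : ℝ) (x y : V4) : V4 :=
  ![-(x 2 * y 3 - x 3 * y 2),
    (x 0 * y 2 - x 2 * y 0) + 2 * (x 1 * y 2 - x 2 * y 1)
      - (2/μ) * (x 2 * y 3 - x 3 * y 2),
    (x 0 * y 3 - x 3 * y 0) + 2 * (x 1 * y 3 - x 3 * y 1),
    2 * (x 2 * y 3 - x 3 * y 2)]

/-- The matrix (in the basis `r₀,r₁,r₂,A`) of the Killing form
`B(X,Y) = tr(ad_X ∘ ad_Y)`. -/
def killing (μ : ℝ) : Matrix (Fin 4) (Fin 4) ℝ :=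
  Matrix.of fun i j => ∑ k : Fin 4, bra4 μ (e4 i) (bra4 μ (e4 j) (e4 k)) k

lemma killing_eq (μ : ℝ) :
    killing μ = !![0,0,0,-4; 0,0,0,-8; 0,0,8,0; -4,-8,0,-(2+8/μ)] := by
  ext i j
  fin_cases i <;> fin_cases j <;>
    simp [killing, bra4, e4, Fin.sum_univ_four, Pi.single_apply] <;> ring

lemma charpoly_eq (μ : ℝ) :
    (!![0,0,0,-4; 0,0,0,-8; 0,0,8,0; -4,-8,0,-(2+8/μ)] :
        Matrix (Fin 4) (Fin 4) ℝ).charpoly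
      = (X^2 + C (2+8/μ) * X - C 80) * X * (X - C 8) := by
  rw [Matrix.charpoly]
  simp [Matrix.det_succ_row_zero, Fin.sum_univ_succ, Matrix.charmatrix_apply,
    Matrix.diagonal_apply]
  simp [Fin.castSucc, Fin.castAdd, Fin.castLE, map_ofNat, Fin.succAbove, Fin.lt_def]
  ring

/-- the given bracket satisfies the Jacobi identity (hence defines a Lie
algebra, the isometry Lie algebra of `(G₀, g_{μ,1})`), and its Killing form has
eigenvalues `−(μ+4±√(81μ²+8μ+16))/μ`, `0` and `8`. -/
theorem stmt6 (μ : ℝ) (hμ : 0 < μ) :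
    (∀ x y z : V4,
      bra4 μ x (bra4 μ y z) + bra4 μ y (bra4 μ z x) + bra4 μ z (bra4 μ x y) = 0) ∧
    (killing μ).charpoly =
      (X - C (-((μ + 4 + Real.sqrt (81*μ^2 + 8*μ + 16)) / μ))) *
      (X - C (-((μ + 4 - Real.sqrt (81*μ^2 + 8*μ + 16)) / μ))) *
      X * (X - C 8) := by
  constructor
  · intro x y z
    funext i
    fin_cases i <;> simp [bra4] <;> ring
  · set s := Real.sqrt (81*μ^2 + 8*μ + 16) with hs
    set a : ℝ := -((μ + 4 + s) / μ) with ha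
    set b : ℝ := -((μ + 4 - s) / μ) with hb
    have hμ0 : μ ≠ 0 := ne_of_gt hμ
    have hs2 : s^2 = 81*μ^2 + 8*μ + 16 := by
      rw [hs, Real.sq_sqrt]; nlinarith
    have h1 : a + b = -(2 + 8/μ) := by
      rw [ha, hb]; field_simp; ring
    have h2 : a * b = -80 := by
      rw [ha, hb]
      have : (μ + 4 + s) * (μ + 4 - s) = -80 * μ^2 := by nlinarith [hs2]
      field_simp
      nlinarith [hs2]
    have key : (X - C a) * (X - C b) = X^2 + C (2+8/μ) * X - C 80 := by
      have expand : (X - C a) * (X - C b)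
          = X^2 - C (a+b) * X + C (a*b) := by
        simp [C_add, C_mul]; ring
      rw [expand, h1, h2]
      simp [C_neg]
      ring
    rw [killing_eq, charpoly_eq, ← key]
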